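/- Let v₀, v₁, v₂, v₃ ∈ ℂ² be nonzero vectors that are pairwise linearly independent over ℂ. Then the integral ∫_{Δ³} Q_v(t)^{-2} dt₁ dt₂ dt₃ is finite; that is, the function (t₁,t₂,t₃) ↦ 1/Q_v(1−t₁−t₂−t₃, t₁, t₂, t₃)² is integrable with respect to Lebesgue measure on the set {(t₁,t₂,t₃) ∈ ℝ³ : t₁, t₂, t₃ ≥ 0, t₁+t₂+t₃ ≤ 1}. -/

import Mathlib

open MeasureTheory

/-- `det2 v w = v₁·w₂ − v₂·w₁`, the determinant of the 2×2 matrix with columns `v` and `w`. -/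
noncomputable def det2 (v w : Fin 2 → ℂ) : ℂ := v 0 * w 1 - v 1 * w 0

/-- `Q_v(t) = ∑_{i≠j} t_i t_j |det(v_i,v_j)|²`, sum over ordered pairs of distinct indices. -/
noncomputable def Qform (v : Fin 4 → Fin 2 → ℂ) (t : Fin 4 → ℝ) : ℝ :=
  ∑ i : Fin 4, ∑ j : Fin 4,
    if i ≠ j then t i * t j * ‖det2 (v i) (v j)‖ ^ 2 else 0

/-- The parameter domain `{(t₁,t₂,t₃) : tᵢ ≥ 0, t₁+t₂+t₃ ≤ 1}` of the 3-simplex. -/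
def simplexDom : Set (Fin 3 → ℝ) :=
  {p | (∀ i, 0 ≤ p i) ∧ p 0 + p 1 + p 2 ≤ 1}

/-- The point of the 3-simplex with coordinates `(1−t₁−t₂−t₃, t₁, t₂, t₃)`. -/
noncomputable def tOf (p : Fin 3 → ℝ) : Fin 4 → ℝ :=
  ![1 - p 0 - p 1 - p 2, p 0, p 1, p 2]

/- ### Auxiliary lemmas -/

lemma aux_det2_ne_zero {a b : Fin 2 → ℂ} (hb : b ≠ 0) (h : LinearIndependent ℂ ![a, b]) :
    det2 a b ≠ 0 := by
  intro hd
  rw [linearIndependent_fin2] at h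
  obtain ⟨-, h2⟩ := h
  simp only [Matrix.cons_val_one, Matrix.head_cons, Matrix.cons_val_zero] at h2
  have hd' : a 0 * b 1 - a 1 * b 0 = 0 := hd
  have hb' : b 0 ≠ 0 ∨ b 1 ≠ 0 := by
    by_contra hc
    push_neg at hc
    exact hb (funext fun i => by fin_cases i <;> simp [hc.1, hc.2])
  rcases hb' with h0 | h1
  · refine h2 (a 0 / b 0) (funext (Fin.forall_fin_two.mpr ⟨?_, ?_⟩))
    · show (a 0 / b 0) * b 0 = a 0
      field_simp
    · show (a 0 / b 0) * b 1 = a 1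
      rw [div_mul_eq_mul_div, div_eq_iff h0]
      linear_combination hd'
  · refine h2 (a 1 / b 1) (funext (Fin.forall_fin_two.mpr ⟨?_, ?_⟩))
    · show (a 1 / b 1) * b 0 = a 0
      rw [div_mul_eq_mul_div, div_eq_iff h1]
      linear_combination -hd'
    · show (a 1 / b 1) * b 1 = a 1
      field_simp

lemma aux_term_le_Qform (v : Fin 4 → Fin 2 → ℂ) {c : ℝ}
    (hcle : ∀ i j : Fin 4, i ≠ j → c ≤ ‖det2 (v i) (v j)‖ ^ 2)
    (t : Fin 4 → ℝ) (ht : ∀ k, 0 ≤ t k) (i j : Fin 4) (hij : i ≠ j) :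
    c * (t i * t j) ≤ Qform v t := by
  have hterm : ∀ a b : Fin 4,
      0 ≤ if a ≠ b then t a * t b * ‖det2 (v a) (v b)‖ ^ 2 else 0 := by
    intro a b
    split_ifs
    · exact mul_nonneg (mul_nonneg (ht a) (ht b)) (by positivity)
    · exact le_refl 0
  have h1 : c * (t i * t j) ≤ t i * t j * ‖det2 (v i) (v j)‖ ^ 2 := by
    rw [mul_comm]
    exact mul_le_mul_of_nonneg_left (hcle i j hij) (mul_nonneg (ht i) (ht j))
  refine h1.trans ?_
  have h2 : (if i ≠ j then t i * t j * ‖det2 (v i) (v j)‖ ^ 2 else 0)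
      ≤ ∑ b : Fin 4, if i ≠ b then t i * t b * ‖det2 (v i) (v b)‖ ^ 2 else 0 :=
    Finset.single_le_sum (fun b _ => hterm i b) (Finset.mem_univ j)
  rw [if_pos hij] at h2
  refine h2.trans ?_
  exact Finset.single_le_sum (fun a _ => Finset.sum_nonneg fun b _ => hterm a b)
    (Finset.mem_univ i)

lemma aux_core {c Q ti tj d a b e : ℝ} (hc : 0 < c) (hterm : c * (ti * tj) ≤ Q)
    (hti : 1/4 ≤ ti) (htj : d/3 ≤ tj) (ha : 0 < a) (hb : 0 < b) (he : 0 < e)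
    (had : a ≤ d) (hbd : b ≤ d) (hed : e ≤ d) :
    (Q^2)⁻¹ ≤ 144 / c^2 * ((a ^ (2/3:ℝ))⁻¹ * (b ^ (2/3:ℝ))⁻¹ * (e ^ (2/3:ℝ))⁻¹) := by
  have hd : 0 < d := ha.trans_le had
  have hx : (1/4) * (d/3) ≤ ti * tj := mul_le_mul hti htj (by linarith) (by linarith)
  have hQ : c * d / 12 ≤ Q :=
    le_trans (by nlinarith [mul_le_mul_of_nonneg_left hx hc.le]) hterm
  have hQ0 : 0 < Q := lt_of_lt_of_le (by positivity) hQ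
  have h2 : (Q^2)⁻¹ ≤ ((c*d/12)^2)⁻¹ :=
    inv_anti₀ (by positivity) (pow_le_pow_left₀ (by positivity) hQ 2)
  have hbe : b * e ≤ d * d := mul_le_mul hbd hed he.le hd.le
  have habe : a * (b * e) ≤ d ^ 3 := by
    have h := mul_le_mul had hbe (by positivity) hd.le
    nlinarith [h]
  have h4 : (a * (b * e)) ^ (2/3:ℝ) ≤ (d ^ 3) ^ (2/3:ℝ) :=
    Real.rpow_le_rpow (by positivity) habe (by norm_num)
  rw [Real.mul_rpow ha.le (by positivity), Real.mul_rpow hb.le he.le,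
    ← Real.rpow_natCast d 3, ← Real.rpow_mul hd.le] at h4
  norm_num at h4
  have h5 : (d^2)⁻¹ ≤ (a ^ (2/3:ℝ))⁻¹ * (b ^ (2/3:ℝ))⁻¹ * (e ^ (2/3:ℝ))⁻¹ := by
    rw [← mul_inv, ← mul_inv]
    exact inv_anti₀ (by positivity) (by linarith [h4])
  calc (Q^2)⁻¹ ≤ ((c*d/12)^2)⁻¹ := h2
    _ = 144 / c^2 * (d^2)⁻¹ := by field_simp; ring
    _ ≤ _ := mul_le_mul_of_nonneg_left h5 (by positivity)

/-- The auxiliary one-variable comparison function: `x^(-2/3)` cut off to `[0,1]`. -/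
noncomputable def auxF : ℝ → ℝ := (Set.Icc (0:ℝ) 1).indicator (fun x => (x ^ (2/3:ℝ))⁻¹)

lemma aux_integrable_F : Integrable auxF := by
  have h1 : IntegrableOn (fun x : ℝ => x ^ (-(2/3) : ℝ)) (Set.Ioo 0 1) :=
    (intervalIntegral.integrableOn_Ioo_rpow_iff one_pos).mpr (by norm_num)
  have h2 : IntegrableOn (fun x : ℝ => (x ^ (2/3:ℝ))⁻¹) (Set.Ioo 0 1) := by
    refine h1.congr_fun (fun x hx => ?_) measurableSet_Ioo
    dsimp only
    rw [Real.rpow_neg hx.1.le]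
  have h3 : IntegrableOn (fun x : ℝ => (x ^ (2/3:ℝ))⁻¹) (Set.Icc 0 1) := by
    rwa [integrableOn_Icc_iff_integrableOn_Ioo]
  exact h3.integrable_indicator measurableSet_Icc

lemma aux_integrable_G : Integrable (fun x : ℝ => auxF (1 - x)) :=
  aux_integrable_F.comp_sub_left 1

lemma auxF_eval {x : ℝ} (h1 : 0 ≤ x) (h2 : x ≤ 1) : auxF x = (x ^ (2/3:ℝ))⁻¹ :=
  Set.indicator_of_mem (Set.mem_Icc.mpr ⟨h1, h2⟩) _

lemma aux_prod3 (f g h : ℝ → ℝ) (hf : Integrable f) (hg : Integrable g) (hh : Integrable h) :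
    Integrable (fun x : Fin 3 → ℝ => f (x 0) * g (x 1) * h (x 2)) := by
  have := Integrable.fin_nat_prod (𝕜 := ℝ) (μ := fun _ => volume) (f := ![f, g, h]) (by intro i; fin_cases i <;> simpa)
  simpa [Fin.prod_univ_three, volume_pi] using this

lemma aux_null (i : Fin 3) : volume {p : Fin 3 → ℝ | p i = 0} = 0 := by
  have heq : {p : Fin 3 → ℝ | p i = 0}
      = Set.pi Set.univ (fun j => if j = i then ({0} : Set ℝ) else Set.univ) := by
    ext p
    simp only [Set.mem_setOf_eq, Set.mem_pi, Set.mem_univ, true_implies]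
    constructor
    · intro h j
      by_cases hj : j = i
      · subst hj; simp [h]
      · simp [hj]
    · intro h
      have := h i
      simpa using this
  rw [heq, volume_pi_pi]
  exact Finset.prod_eq_zero (Finset.mem_univ i) (by simp)

lemma aux_hsm : MeasurableSet simplexDom := by
  have : simplexDom = (⋂ i : Fin 3, {p : Fin 3 → ℝ | 0 ≤ p i}) ∩ {p | p 0 + p 1 + p 2 ≤ 1} := by
    ext p; simp [simplexDom, Set.mem_iInter]
  rw [this]
  exact (MeasurableSet.iInter fun i =>
      measurableSet_le measurable_const (measurable_pi_apply i)).inter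
    (measurableSet_le (((measurable_pi_apply 0).add (measurable_pi_apply 1)).add
      (measurable_pi_apply 2)) measurable_const)

lemma aux_hmtOf (i : Fin 4) : Measurable fun p : Fin 3 → ℝ => tOf p i := by
  fin_cases i
  · exact ((measurable_const.sub (measurable_pi_apply 0)).sub (measurable_pi_apply 1)).sub
      (measurable_pi_apply 2)
  · exact measurable_pi_apply 0
  · exact measurable_pi_apply 1
  · exact measurable_pi_apply 2

set_option maxHeartbeats 1600000 in
/-- For nonzero, pairwise linearly independent vectors, `1/Q_v(t)²` is Lebesgue-integrable
over the standard 3-simplex. -/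
theorem integrable_inv_Qform_sq (v : Fin 4 → Fin 2 → ℂ)
    (hv : ∀ i, v i ≠ 0)
    (hind : ∀ i j : Fin 4, i ≠ j → LinearIndependent ℂ ![v i, v j]) :
    IntegrableOn (fun p => (Qform v (tOf p) ^ 2)⁻¹) simplexDom volume := by
  -- a uniform positive lower bound for the pairwise determinants
  obtain ⟨c, hc, hcle⟩ : ∃ c : ℝ, 0 < c ∧
      ∀ i j : Fin 4, i ≠ j → c ≤ ‖det2 (v i) (v j)‖ ^ 2 := by
    have hne : ((Finset.univ : Finset (Fin 4 × Fin 4)).filter fun q => q.1 ≠ q.2).Nonempty :=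
      ⟨(0, 1), by simp⟩
    obtain ⟨q, hq, hqmin⟩ := Finset.exists_min_image
      ((Finset.univ : Finset (Fin 4 × Fin 4)).filter fun q => q.1 ≠ q.2)
      (fun q => ‖det2 (v q.1) (v q.2)‖ ^ 2) hne
    refine ⟨_, ?_, fun i j hij => hqmin (i, j) (by simpa using hij)⟩
    have hqne : q.1 ≠ q.2 := by simpa using (Finset.mem_filter.mp hq).2
    have := aux_det2_ne_zero (hv q.2) (hind q.1 q.2 hqne)
    exact pow_pos (norm_pos_iff.mpr this) 2
  -- measurability of the integrand
  have hQm : Measurable fun p : Fin 3 → ℝ => Qform v (tOf p) := by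
    unfold Qform
    refine Finset.measurable_sum _ fun i _ => Finset.measurable_sum _ fun j _ => ?_
    split_ifs
    · exact ((aux_hmtOf i).mul (aux_hmtOf j)).mul_const _
    · exact measurable_const
  refine Integrable.mono'
    (g := fun p : Fin 3 → ℝ => 144 / c ^ 2 *
      (auxF (p 0) * auxF (p 1) * auxF (p 2) + auxF (1 - p 0) * auxF (p 1) * auxF (p 2) +
       auxF (p 0) * auxF (1 - p 1) * auxF (p 2) + auxF (p 0) * auxF (p 1) * auxF (1 - p 2)))
    ?_ (((hQm.pow_const 2).inv).aestronglyMeasurable.restrict) ((ae_restrict_iff' aux_hsm).mpr ?_)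
  · -- integrability of the comparison function
    have I1 := aux_prod3 auxF auxF auxF aux_integrable_F aux_integrable_F aux_integrable_F
    have I2 : Integrable (fun x : Fin 3 → ℝ => auxF (1 - x 0) * auxF (x 1) * auxF (x 2)) :=
      aux_prod3 _ auxF auxF aux_integrable_G aux_integrable_F aux_integrable_F
    have I3 : Integrable (fun x : Fin 3 → ℝ => auxF (x 0) * auxF (1 - x 1) * auxF (x 2)) :=
      aux_prod3 auxF _ auxF aux_integrable_F aux_integrable_G aux_integrable_F
    have I4 : Integrable (fun x : Fin 3 → ℝ => auxF (x 0) * auxF (x 1) * auxF (1 - x 2)) :=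
      aux_prod3 auxF auxF _ aux_integrable_F aux_integrable_F aux_integrable_G
    exact ((((I1.add I2).add I3).add I4).const_mul _).integrableOn
  · -- the pointwise bound, a.e. on the simplex
    filter_upwards [compl_mem_ae_iff.mpr (aux_null 0), compl_mem_ae_iff.mpr (aux_null 1),
      compl_mem_ae_iff.mpr (aux_null 2)] with p h0 h1 h2 hp
    obtain ⟨hge, hsum⟩ := hp
    have hp0 : 0 < p 0 := (hge 0).lt_of_ne (fun h => h0 h.symm)
    have hp1 : 0 < p 1 := (hge 1).lt_of_ne (fun h => h1 h.symm)
    have hp2 : 0 < p 2 := (hge 2).lt_of_ne (fun h => h2 h.symm)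
    have e0 : tOf p 0 = 1 - p 0 - p 1 - p 2 := rfl
    have e1 : tOf p 1 = p 0 := rfl
    have e2 : tOf p 2 = p 1 := rfl
    have e3 : tOf p 3 = p 2 := rfl
    have ht : ∀ k, 0 ≤ tOf p k := by
      intro k; fin_cases k
      · show (0:ℝ) ≤ 1 - p 0 - p 1 - p 2; linarith
      · exact hge 0
      · exact hge 1
      · exact hge 2
    -- rewrite the indicator functions
    rw [Real.norm_eq_abs, abs_of_nonneg (inv_nonneg.2 (sq_nonneg _)),
      auxF_eval hp0.le (by linarith), auxF_eval hp1.le (by linarith),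
      auxF_eval hp2.le (by linarith), auxF_eval (x := 1 - p 0) (by linarith) (by linarith),
      auxF_eval (x := 1 - p 1) (by linarith) (by linarith),
      auxF_eval (x := 1 - p 2) (by linarith) (by linarith)]
    -- nonnegativity of all four products
    have nA0 : 0 ≤ ((p 0) ^ (2/3:ℝ))⁻¹ := inv_nonneg.2 (Real.rpow_nonneg hp0.le _)
    have nA1 : 0 ≤ ((p 1) ^ (2/3:ℝ))⁻¹ := inv_nonneg.2 (Real.rpow_nonneg hp1.le _)
    have nA2 : 0 ≤ ((p 2) ^ (2/3:ℝ))⁻¹ := inv_nonneg.2 (Real.rpow_nonneg hp2.le _)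
    have nB0 : 0 ≤ ((1 - p 0) ^ (2/3:ℝ))⁻¹ :=
      inv_nonneg.2 (Real.rpow_nonneg (by linarith) _)
    have nB1 : 0 ≤ ((1 - p 1) ^ (2/3:ℝ))⁻¹ :=
      inv_nonneg.2 (Real.rpow_nonneg (by linarith) _)
    have nB2 : 0 ≤ ((1 - p 2) ^ (2/3:ℝ))⁻¹ :=
      inv_nonneg.2 (Real.rpow_nonneg (by linarith) _)
    have P1 : 0 ≤ ((p 0) ^ (2/3:ℝ))⁻¹ * ((p 1) ^ (2/3:ℝ))⁻¹ * ((p 2) ^ (2/3:ℝ))⁻¹ := by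
      positivity
    have P2 : 0 ≤ ((1 - p 0) ^ (2/3:ℝ))⁻¹ * ((p 1) ^ (2/3:ℝ))⁻¹ * ((p 2) ^ (2/3:ℝ))⁻¹ := by
      positivity
    have P3 : 0 ≤ ((p 0) ^ (2/3:ℝ))⁻¹ * ((1 - p 1) ^ (2/3:ℝ))⁻¹ * ((p 2) ^ (2/3:ℝ))⁻¹ := by
      positivity
    have P4 : 0 ≤ ((p 0) ^ (2/3:ℝ))⁻¹ * ((p 1) ^ (2/3:ℝ))⁻¹ * ((1 - p 2) ^ (2/3:ℝ))⁻¹ := by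
      positivity
    have hK : (0:ℝ) ≤ 144 / c ^ 2 := by positivity
    -- choose the large barycentric coordinate
    have hmax : 1/4 ≤ tOf p 0 ∨ 1/4 ≤ tOf p 1 ∨ 1/4 ≤ tOf p 2 ∨ 1/4 ≤ tOf p 3 := by
      by_contra hcon
      push_neg at hcon
      obtain ⟨c0, c1, c2, c3⟩ := hcon
      rw [e0] at c0; rw [e1] at c1; rw [e2] at c2; rw [e3] at c3
      linarith
    rcases hmax with hcase | hcase | hcase | hcase
    · -- vertex 0 : d = p0 + p1 + p2
      have hj : (p 0 + p 1 + p 2)/3 ≤ p 0 ∨ (p 0 + p 1 + p 2)/3 ≤ p 1 ∨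
          (p 0 + p 1 + p 2)/3 ≤ p 2 := by
        by_contra hcon; push_neg at hcon; obtain ⟨c1, c2, c3⟩ := hcon; linarith
      have hbnd : (Qform v (tOf p) ^ 2)⁻¹ ≤ 144 / c ^ 2 *
          (((p 0) ^ (2/3:ℝ))⁻¹ * ((p 1) ^ (2/3:ℝ))⁻¹ * ((p 2) ^ (2/3:ℝ))⁻¹) := by
        rcases hj with hj | hj | hj
        · exact aux_core hc (aux_term_le_Qform v hcle (tOf p) ht 0 1 (by decide)) hcase
            (by rw [e1]; exact hj) hp0 hp1 hp2 (by linarith) (by linarith) (by linarith)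
        · exact aux_core hc (aux_term_le_Qform v hcle (tOf p) ht 0 2 (by decide)) hcase
            (by rw [e2]; exact hj) hp0 hp1 hp2 (by linarith) (by linarith) (by linarith)
        · exact aux_core hc (aux_term_le_Qform v hcle (tOf p) ht 0 3 (by decide)) hcase
            (by rw [e3]; exact hj) hp0 hp1 hp2 (by linarith) (by linarith) (by linarith)
      exact hbnd.trans (mul_le_mul_of_nonneg_left (by linarith) hK)
    · -- vertex 1 : d = 1 - p0
      have ht0 : 0 ≤ 1 - p 0 - p 1 - p 2 := by linarith
      have hj : (1 - p 0)/3 ≤ 1 - p 0 - p 1 - p 2 ∨ (1 - p 0)/3 ≤ p 1 ∨ (1 - p 0)/3 ≤ p 2 := by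
        by_contra hcon; push_neg at hcon; obtain ⟨c1, c2, c3⟩ := hcon; linarith
      have hd1 : 0 < 1 - p 0 := by linarith
      have hbnd : (Qform v (tOf p) ^ 2)⁻¹ ≤ 144 / c ^ 2 *
          (((1 - p 0) ^ (2/3:ℝ))⁻¹ * ((p 1) ^ (2/3:ℝ))⁻¹ * ((p 2) ^ (2/3:ℝ))⁻¹) := by
        rcases hj with hj | hj | hj
        · exact aux_core hc (aux_term_le_Qform v hcle (tOf p) ht 1 0 (by decide))
            (by rw [e1] at hcase ⊢; exact hcase) (by rw [e0]; exact hj) hd1 hp1 hp2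
            le_rfl (by linarith) (by linarith)
        · exact aux_core hc (aux_term_le_Qform v hcle (tOf p) ht 1 2 (by decide))
            (by rw [e1] at hcase ⊢; exact hcase) (by rw [e2]; exact hj) hd1 hp1 hp2
            le_rfl (by linarith) (by linarith)
        · exact aux_core hc (aux_term_le_Qform v hcle (tOf p) ht 1 3 (by decide))
            (by rw [e1] at hcase ⊢; exact hcase) (by rw [e3]; exact hj) hd1 hp1 hp2
            le_rfl (by linarith) (by linarith)
      exact hbnd.trans (mul_le_mul_of_nonneg_left (by linarith) hK)
    · -- vertex 2 : d = 1 - p1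
      have ht0 : 0 ≤ 1 - p 0 - p 1 - p 2 := by linarith
      have hj : (1 - p 1)/3 ≤ 1 - p 0 - p 1 - p 2 ∨ (1 - p 1)/3 ≤ p 0 ∨ (1 - p 1)/3 ≤ p 2 := by
        by_contra hcon; push_neg at hcon; obtain ⟨c1, c2, c3⟩ := hcon; linarith
      have hd1 : 0 < 1 - p 1 := by linarith
      have hbnd : (Qform v (tOf p) ^ 2)⁻¹ ≤ 144 / c ^ 2 *
          (((p 0) ^ (2/3:ℝ))⁻¹ * ((1 - p 1) ^ (2/3:ℝ))⁻¹ * ((p 2) ^ (2/3:ℝ))⁻¹) := by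
        rcases hj with hj | hj | hj
        · exact aux_core hc (aux_term_le_Qform v hcle (tOf p) ht 2 0 (by decide))
            (by rw [e2] at hcase ⊢; exact hcase) (by rw [e0]; exact hj) hp0 hd1 hp2
            (by linarith) le_rfl (by linarith)
        · exact aux_core hc (aux_term_le_Qform v hcle (tOf p) ht 2 1 (by decide))
            (by rw [e2] at hcase ⊢; exact hcase) (by rw [e1]; exact hj) hp0 hd1 hp2
            (by linarith) le_rfl (by linarith)
        · exact aux_core hc (aux_term_le_Qform v hcle (tOf p) ht 2 3 (by decide))
            (by rw [e2] at hcase ⊢; exact hcase) (by rw [e3]; exact hj) hp0 hd1 hp2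
            (by linarith) le_rfl (by linarith)
      exact hbnd.trans (mul_le_mul_of_nonneg_left (by linarith) hK)
    · -- vertex 3 : d = 1 - p2
      have ht0 : 0 ≤ 1 - p 0 - p 1 - p 2 := by linarith
      have hj : (1 - p 2)/3 ≤ 1 - p 0 - p 1 - p 2 ∨ (1 - p 2)/3 ≤ p 0 ∨ (1 - p 2)/3 ≤ p 1 := by
        by_contra hcon; push_neg at hcon; obtain ⟨c1, c2, c3⟩ := hcon; linarith
      have hd1 : 0 < 1 - p 2 := by linarith
      have hbnd : (Qform v (tOf p) ^ 2)⁻¹ ≤ 144 / c ^ 2 *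
          (((p 0) ^ (2/3:ℝ))⁻¹ * ((p 1) ^ (2/3:ℝ))⁻¹ * ((1 - p 2) ^ (2/3:ℝ))⁻¹) := by
        rcases hj with hj | hj | hj
        · exact aux_core hc (aux_term_le_Qform v hcle (tOf p) ht 3 0 (by decide))
            (by rw [e3] at hcase ⊢; exact hcase) (by rw [e0]; exact hj) hp0 hp1 hd1
            (by linarith) (by linarith) le_rfl
        · exact aux_core hc (aux_term_le_Qform v hcle (tOf p) ht 3 1 (by decide))
            (by rw [e3] at hcase ⊢; exact hcase) (by rw [e1]; exact hj) hp0 hp1 hd1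
            (by linarith) (by linarith) le_rfl
        · exact aux_core hc (aux_term_le_Qform v hcle (tOf p) ht 3 2 (by decide))
            (by rw [e3] at hcase ⊢; exact hcase) (by rw [e2]; exact hj) hp0 hp1 hd1
            (by linarith) (by linarith) le_rfl
      exact hbnd.trans (mul_le_mul_of_nonneg_left (by linarith) hK)
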